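/- The prefix lower bounds are monotone nondecreasing: for 0 ≤ k ≤ k' ≤ |P|, LB_k ≤ LB_{k'}, where LB_k = min_{0 ≤ j ≤ |Q|} wed(P_{1:k}, Q_{1:j}), provided all deletion costs are nonnegative. -/

import Mathlib

/-- Weighted edit distance over strings on alphabet `α`, with `none` playing the
role of the empty symbol `ε`; `sub a b` is the cost of substituting `a` by `b`,
`sub none (some b)` the insertion cost and `sub (some a) none` the deletion cost. -/
noncomputable def wed {α : Type*} (sub : Option α → Option α → ℝ) : List α → List α → ℝ
  | [], Q => (Q.map (fun q => sub none (some q))).sum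
  | p :: P, [] => sub (some p) none + wed sub P []
  | p :: P, q :: Q =>
      min (min (wed sub P Q + sub (some p) (some q))
               (wed sub P (q :: Q) + sub (some p) none))
          (wed sub (p :: P) Q + sub none (some q))
termination_by P Q => P.length + Q.length
decreasing_by all_goals (simp [List.length]; try omega)

theorem wed_nonneg {α : Type*} (sub : Option α → Option α → ℝ)
    (hnn : ∀ a b : Option α, 0 ≤ sub a b) : ∀ P Q : List α, 0 ≤ wed sub P Q := by
  intro P Q
  induction P, Q using wed.induct with
  | case1 Q => rw [wed]; exact List.sum_nonneg (by simp_all)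
  | case2 p P ih => rw [wed]; have := hnn (some p) none; linarith
  | case3 p P q Q ih1 ih2 ih3 =>
      rw [wed]
      have := hnn (some p) (some q); have := hnn (some p) none; have := hnn none (some q)
      simp only [le_min_iff]; constructor <;> [constructor; skip] <;> linarith

theorem wed_le_sub {α : Type*} (sub : Option α → Option α → ℝ) (p q : α) (P Q : List α) :
    wed sub (p :: P) (q :: Q) ≤ wed sub P Q + sub (some p) (some q) := by
  rw [wed]; exact le_trans (min_le_left _ _) (min_le_left _ _)

theorem wed_le_del {α : Type*} (sub : Option α → Option α → ℝ) (p q : α) (P Q : List α) :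
    wed sub (p :: P) (q :: Q) ≤ wed sub P (q :: Q) + sub (some p) none := by
  rw [wed]; exact le_trans (min_le_left _ _) (min_le_right _ _)

theorem wed_le_ins {α : Type*} (sub : Option α → Option α → ℝ) (p q : α) (P Q : List α) :
    wed sub (p :: P) (q :: Q) ≤ wed sub (p :: P) Q + sub none (some q) := by
  rw [wed]; exact min_le_right _ _

theorem wed_key {α : Type*} (sub : Option α → Option α → ℝ)
    (hnn : ∀ a b : Option α, 0 ≤ sub a b) (x : α) :
    ∀ n (P Q : List α), P.length + Q.length ≤ n →
      ∃ j ≤ Q.length, wed sub P (Q.take j) ≤ wed sub (P ++ [x]) Q := by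
  intro n
  induction n with
  | zero =>
      intro P Q h
      have hP : P = [] := by cases P <;> simp_all
      have hQ : Q = [] := by cases Q <;> simp_all
      subst hP; subst hQ
      exact ⟨0, le_refl _, by simp [wed]; exact hnn _ _⟩
  | succ n ih =>
      intro P Q h
      match P with
      | [] =>
          refine ⟨0, Nat.zero_le _, ?_⟩
          simp only [List.take_zero]
          show wed sub [] [] ≤ _
          rw [wed]; simpa using wed_nonneg sub hnn [x] Q
      | p :: P' =>
          match Q with
          | [] =>
              refine ⟨0, le_refl _, ?_⟩
              obtain ⟨j, hj, hle⟩ := ih P' [] (by simp at h ⊢; omega)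
              simp only [List.take_nil] at hle ⊢
              show wed sub (p :: P') [] ≤ wed sub (p :: (P' ++ [x])) []
              rw [wed, wed]
              linarith
          | q :: Q' =>
              have hexp : wed sub ((p :: P') ++ [x]) (q :: Q') =
                  min (min (wed sub (P' ++ [x]) Q' + sub (some p) (some q))
                           (wed sub (P' ++ [x]) (q :: Q') + sub (some p) none))
                      (wed sub ((p :: P') ++ [x]) Q' + sub none (some q)) := by
                show wed sub (p :: (P' ++ [x])) (q :: Q') = _
                rw [wed]; rfl
              simp only [List.length] at h
              rcases min_cases (min (wed sub (P' ++ [x]) Q' + sub (some p) (some q))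
                           (wed sub (P' ++ [x]) (q :: Q') + sub (some p) none))
                      (wed sub ((p :: P') ++ [x]) Q' + sub none (some q)) with ⟨hm, _⟩ | ⟨hm, _⟩
              · rcases min_cases (wed sub (P' ++ [x]) Q' + sub (some p) (some q))
                    (wed sub (P' ++ [x]) (q :: Q') + sub (some p) none) with ⟨hm2, _⟩ | ⟨hm2, _⟩
                · -- substitution branch
                  obtain ⟨j, hj, hle⟩ := ih P' Q' (by omega)
                  refine ⟨j + 1, by simpa using hj, ?_⟩
                  rw [hexp, hm, hm2, List.take_succ_cons]
                  calc wed sub (p :: P') (q :: Q'.take j)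
                      ≤ wed sub P' (Q'.take j) + sub (some p) (some q) := wed_le_sub ..
                    _ ≤ _ := by linarith
                · -- deletion branch
                  obtain ⟨j, hj, hle⟩ := ih P' (q :: Q') (by simp; omega)
                  refine ⟨j, by simpa using hj, ?_⟩
                  rw [hexp, hm, hm2]
                  match j with
                  | 0 =>
                      simp only [List.take_zero] at hle ⊢
                      show wed sub (p :: P') [] ≤ _
                      rw [wed]
                      have : wed sub P' [] ≤ wed sub (P' ++ [x]) (q :: Q') := by
                        simpa using hle
                      linarith
                  | j' + 1 =>
                      rw [List.take_succ_cons] at hle ⊢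
                      calc wed sub (p :: P') (q :: Q'.take j')
                          ≤ wed sub P' (q :: Q'.take j') + sub (some p) none := wed_le_del ..
                        _ ≤ _ := by linarith
              · -- insertion branch
                obtain ⟨j, hj, hle⟩ := ih (p :: P') Q' (by simp; omega)
                refine ⟨j + 1, by simpa using hj, ?_⟩
                rw [hexp, hm, List.take_succ_cons]
                calc wed sub (p :: P') (q :: Q'.take j)
                    ≤ wed sub (p :: P') (Q'.take j) + sub none (some q) := wed_le_ins ..
                  _ ≤ _ := by linarith

theorem lb_step {α : Type*} (sub : Option α → Option α → ℝ)
    (hnn : ∀ a b : Option α, 0 ≤ sub a b) (P Q : List α) (k : ℕ) (hk : k < P.length) :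
    (Finset.range (Q.length + 1)).inf' ⟨0, by simp⟩
        (fun j => wed sub (P.take k) (Q.take j)) ≤
      (Finset.range (Q.length + 1)).inf' ⟨0, by simp⟩
        (fun j => wed sub (P.take (k + 1)) (Q.take j)) := by
  apply Finset.le_inf'
  intro j hj
  obtain ⟨j', hj', hle⟩ := wed_key sub hnn (P.get ⟨k, hk⟩)
    ((P.take k).length + (Q.take j).length) (P.take k) (Q.take j) le_rfl
  have hj'2 : j' ≤ j := le_trans hj' (by simp)
  have hj'Q : j' ≤ Q.length := le_trans hj' (by simp)
  have e1 : (Q.take j).take j' = Q.take j' := by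
    rw [List.take_take]; congr 1; omega
  have e2 : P.take k ++ [P.get ⟨k, hk⟩] = P.take (k + 1) := by
    rw [List.get_eq_getElem, ← List.concat_eq_append, List.take_concat_get]
  rw [e2] at hle
  calc (Finset.range (Q.length + 1)).inf' ⟨0, by simp⟩
        (fun j => wed sub (P.take k) (Q.take j))
      ≤ wed sub (P.take k) (Q.take j') := Finset.inf'_le _ (by simp; omega)
    _ = wed sub (P.take k) ((Q.take j).take j') := by rw [e1]
    _ ≤ wed sub (P.take (k + 1)) (Q.take j) := hle


/-- the prefix lower bounds `LB_k = min_{0 ≤ j ≤ |Q|}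
wed(P_{1:k}, Q_{1:j})` are monotone nondecreasing in `k` (costs nonnegative). -/
theorem prefix_lower_bound_mono {α : Type*} (sub : Option α → Option α → ℝ)
    (hnn : ∀ a b : Option α, 0 ≤ sub a b)
    (P Q : List α) (k k' : ℕ) (hkk' : k ≤ k') (hk' : k' ≤ P.length) :
    (Finset.range (Q.length + 1)).inf' ⟨0, by simp⟩
        (fun j => wed sub (P.take k) (Q.take j)) ≤
      (Finset.range (Q.length + 1)).inf' ⟨0, by simp⟩
        (fun j => wed sub (P.take k') (Q.take j)) := by
  induction k', hkk' using Nat.le_induction with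
  | base => exact le_refl _
  | succ m hm ih =>
      exact le_trans (ih (by omega)) (lb_step sub hnn P Q m (by omega))
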